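/- arXiv:2002.03352 — 2 statements merged into one kernel-verified Lean document; each statement's English description precedes it below -/
import Mathlib

section
/- Let M₁ = (N, I₁) be a k₁-set system and M₂ = (N, I₂) be a k₂-set system over the same ground set N. Then M = (N, I₁ ∩ I₂) is a (k₁ + k₂)-set system. -/
/-- A set system: contains `∅` and is downward closed. -/
def DownwardClosed {α : Type*} (I : Finset α → Prop) : Prop :=
  ∀ ⦃A B : Finset α⦄, A ⊆ B → I B → I A

def IsSetSystem {α : Type*} (I : Finset α → Prop) : Prop :=
  I ∅ ∧ DownwardClosed I

/-- `B` is a base of `F`: an independent subset of `F` that is maximal. -/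
def IsBase {α : Type*} [DecidableEq α] (I : Finset α → Prop) (F B : Finset α) : Prop :=
  B ⊆ F ∧ I B ∧ ∀ u ∈ F, u ∉ B → ¬ I (insert u B)

/-- `k`-set system: any two bases of any `F` have size ratio at most `k`. -/
def IsKSetSystem {α : Type*} [DecidableEq α] (I : Finset α → Prop) (k : ℕ) : Prop :=
  IsSetSystem I ∧
    ∀ F B₁ B₂ : Finset α, IsBase I F B₁ → IsBase I F B₂ → B₁.card ≤ k * B₂.card

/-- `k`-extendible system. -/
def IsKExtendible {α : Type*} [DecidableEq α] (I : Finset α → Prop) (k : ℕ) : Prop :=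
  IsSetSystem I ∧
    ∀ C D : Finset α, ∀ u : α, I C → I D → C ⊆ D → u ∉ D → I (insert u C) →
      ∃ Y : Finset α, Y ⊆ D \ C ∧ Y.card ≤ k ∧ I (insert u (D \ Y))

/-- Any independent subset of `F` extends to a base of `F`. -/
theorem exists_base_superset {α : Type*} [DecidableEq α] {I : Finset α → Prop}
    (hI : DownwardClosed I) (F : Finset α) :
    ∀ A : Finset α, I A → A ⊆ F → ∃ B, A ⊆ B ∧ IsBase I F B := by
  classical
  suffices h : ∀ n, ∀ A : Finset α, (F \ A).card = n → I A → A ⊆ F →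
      ∃ B, A ⊆ B ∧ IsBase I F B by
    intro A hA hAF; exact h _ A rfl hA hAF
  intro n
  induction n using Nat.strong_induction_on with
  | _ n ih =>
    intro A hn hA hAF
    by_cases h : ∀ u ∈ F, u ∉ A → ¬ I (insert u A)
    · exact ⟨A, subset_rfl, hAF, hA, h⟩
    · push_neg at h
      obtain ⟨u, huF, huA, hins⟩ := h
      have hsub : insert u A ⊆ F := Finset.insert_subset huF hAF
      have hlt : (F \ insert u A).card < n := by
        subst hn
        apply Finset.card_lt_card
        refine ⟨Finset.sdiff_subset_sdiff subset_rfl (Finset.subset_insert u A), ?_⟩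
        intro hcon
        have : u ∈ F \ insert u A := hcon (Finset.mem_sdiff.mpr ⟨huF, huA⟩)
        simp at this
      obtain ⟨B, hB1, hB2⟩ := ih _ hlt (insert u A) rfl hins hsub
      exact ⟨B, (Finset.subset_insert u A).trans hB1, hB2⟩

/-- The intersection of a k₁-set system and a k₂-set system is a (k₁+k₂)-set system. -/
theorem intersection_kSetSystem {α : Type*} [DecidableEq α]
    (I₁ I₂ : Finset α → Prop) (k₁ k₂ : ℕ)
    (h₁ : IsKSetSystem I₁ k₁) (h₂ : IsKSetSystem I₂ k₂) :
    IsKSetSystem (fun S => I₁ S ∧ I₂ S) (k₁ + k₂) := by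
  classical
  obtain ⟨⟨he₁, hd₁⟩, hb₁⟩ := h₁
  obtain ⟨⟨he₂, hd₂⟩, hb₂⟩ := h₂
  refine ⟨⟨⟨he₁, he₂⟩, fun A B hAB hB => ⟨hd₁ hAB hB.1, hd₂ hAB hB.2⟩⟩, ?_⟩
  rintro F B₁ B₂ ⟨hB₁F, ⟨hB₁1, hB₁2⟩, hmax₁⟩ ⟨hB₂F, ⟨hB₂1, hB₂2⟩, hmax₂⟩
  set X₁ := (B₁ \ B₂).filter (fun u => ¬ I₁ (insert u B₂)) with hX₁def
  set X₂ := (B₁ \ B₂) \ X₁ with hX₂def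
  have key : ∀ (I : Finset α → Prop) (k : ℕ), DownwardClosed I →
      (∀ F B₁ B₂ : Finset α, IsBase I F B₁ → IsBase I F B₂ → B₁.card ≤ k * B₂.card) →
      I B₁ → I B₂ →
      ∀ X ⊆ B₁ \ B₂, (∀ u ∈ X, ¬ I (insert u B₂)) →
      X.card + (B₁ ∩ B₂).card ≤ k * B₂.card := by
    intro I k hd hb hIB₁ hIB₂ X hXsub hXfail
    have hXB₁ : X ∪ B₁ ∩ B₂ ⊆ B₁ := by
      intro u hu
      rcases Finset.mem_union.mp hu with h | h
      · exact (Finset.mem_sdiff.mp (hXsub h)).1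
      · exact (Finset.mem_inter.mp h).1
    have hA : I (X ∪ B₁ ∩ B₂) := hd hXB₁ hIB₁
    have hAF' : X ∪ B₁ ∩ B₂ ⊆ B₂ ∪ X := by
      intro u hu
      rcases Finset.mem_union.mp hu with h | h
      · exact Finset.mem_union_right _ h
      · exact Finset.mem_union_left _ (Finset.mem_inter.mp h).2
    have hB₂base : IsBase I (B₂ ∪ X) B₂ := by
      refine ⟨Finset.subset_union_left, hIB₂, fun u huF' huB₂ => ?_⟩
      rcases Finset.mem_union.mp huF' with h | h
      · exact absurd h huB₂
      · exact hXfail u h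
    obtain ⟨C, hAC, hCbase⟩ := exists_base_superset hd (B₂ ∪ X) (X ∪ B₁ ∩ B₂) hA hAF'
    have h1 : (X ∪ B₁ ∩ B₂).card ≤ C.card := Finset.card_le_card hAC
    have h2 : C.card ≤ k * B₂.card := hb (B₂ ∪ X) C B₂ hCbase hB₂base
    have hdisj : Disjoint X (B₁ ∩ B₂) := by
      rw [Finset.disjoint_left]
      intro u hu hu'
      exact (Finset.mem_sdiff.mp (hXsub hu)).2 (Finset.mem_inter.mp hu').2
    rw [Finset.card_union_of_disjoint hdisj] at h1
    omega
  have k1 : X₁.card + (B₁ ∩ B₂).card ≤ k₁ * B₂.card := by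
    refine key I₁ k₁ hd₁ hb₁ hB₁1 hB₂1 X₁ (Finset.filter_subset _ _) ?_
    intro u hu
    exact (Finset.mem_filter.mp hu).2
  have k2 : X₂.card + (B₁ ∩ B₂).card ≤ k₂ * B₂.card := by
    refine key I₂ k₂ hd₂ hb₂ hB₁2 hB₂2 X₂ Finset.sdiff_subset ?_
    intro u hu
    obtain ⟨huBB, huX₁⟩ := Finset.mem_sdiff.mp hu
    obtain ⟨huB₁, huB₂⟩ := Finset.mem_sdiff.mp huBB
    have hI₁ : I₁ (insert u B₂) := by
      by_contra hc
      exact huX₁ (Finset.mem_filter.mpr ⟨huBB, hc⟩)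
    have := hmax₂ u (hB₁F huB₁) huB₂
    intro hI₂
    exact this ⟨hI₁, hI₂⟩
  have hX₁sub : X₁ ⊆ B₁ \ B₂ := Finset.filter_subset _ _
  have hc1 : X₂.card = (B₁ \ B₂).card - X₁.card := Finset.card_sdiff_of_subset hX₁sub
  have hc2 : X₁.card ≤ (B₁ \ B₂).card := Finset.card_le_card hX₁sub
  have hc3 : (B₁ \ B₂).card + (B₁ ∩ B₂).card = B₁.card :=
    Finset.card_sdiff_add_card_inter B₁ B₂
  rw [add_mul]
  omega
end

section
/- Given a cost function c : N → ℝ₊ with c_min = min over N of c and c_max = max over N of c, both positive, and a budget b ≥ c_max, the system M = (N, I) with I = {S ⊆ N : Σ_{u∈S} c(u) ≤ b} is a k-extendible system for k = ⌈c_max / c_min⌉. -/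
/-- A single knapsack constraint with positive costs and budget at least the maximum
cost is a ⌈c_max / c_min⌉-extendible system. -/
theorem knapsack_kExtendible {α : Type*} [DecidableEq α]
    (N : Finset α) (hN : N.Nonempty) (c : α → ℝ)
    (hpos : ∀ u ∈ N, 0 < c u) (b : ℝ) (hb : N.sup' hN c ≤ b) :
    IsKExtendible (fun S : Finset α => S ⊆ N ∧ ∑ u ∈ S, c u ≤ b)
      ⌈N.sup' hN c / N.inf' hN c⌉₊ := by

  classical
  set cmax := N.sup' hN c with hcmaxdef
  set cmin := N.inf' hN c with hcmindef
  set k := ⌈cmax / cmin⌉₊ with hk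
  have hcmin : 0 < cmin := by
    rw [hcmindef, Finset.lt_inf'_iff]
    exact hpos
  have hkcmin : cmax ≤ (k : ℝ) * cmin := by
    have := Nat.le_ceil (cmax / cmin)
    rw [div_le_iff₀ hcmin] at this
    exact this
  constructor
  · constructor
    · refine ⟨Finset.empty_subset N, ?_⟩
      simp only [Finset.sum_empty]
      obtain ⟨x, hx⟩ := hN
      have : 0 < cmax := lt_of_lt_of_le (hpos x hx) (Finset.le_sup' c hx)
      linarith
    · intro A B hAB hB
      refine ⟨hAB.trans hB.1, le_trans ?_ hB.2⟩
      exact Finset.sum_le_sum_of_subset_of_nonneg hAB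
        (fun i hi _ => (hpos i (hB.1 hi)).le)
  · intro C D u hC hD hCD huD huC
    by_cases h : (D \ C).card ≤ k
    · refine ⟨D \ C, subset_rfl, h, ?_⟩
      rw [Finset.sdiff_sdiff_eq_self hCD]
      exact huC
    · push_neg at h
      obtain ⟨Y, hYsub, hYcard⟩ := Finset.exists_subset_card_eq h.le
      refine ⟨Y, hYsub, hYcard.le, ?_⟩
      have hYD : Y ⊆ D := hYsub.trans (Finset.sdiff_subset)
      have huN : u ∈ N := huC.1 (Finset.mem_insert_self u C)
      constructor
      · intro x hx
        rcases Finset.mem_insert.mp hx with rfl | hx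
        · exact huN
        · exact hD.1 (Finset.mem_sdiff.mp hx).1
      · have huDY : u ∉ D \ Y := fun hh => huD (Finset.mem_sdiff.mp hh).1
        rw [Finset.sum_insert huDY, Finset.sum_sdiff_eq_sub hYD]
        have hcu : c u ≤ cmax := Finset.le_sup' c huN
        have hYsum : (k : ℝ) * cmin ≤ ∑ x ∈ Y, c x := by
          have := Finset.card_nsmul_le_sum Y c cmin
            (fun x hx => Finset.inf'_le c (hD.1 (hYD hx)))
          rw [hYcard] at this
          simpa [nsmul_eq_mul] using this
        have hDsum : ∑ x ∈ D, c x ≤ b := hD.2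
        linarith
end
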